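/- arXiv:1509.07155 — 5 statements merged into one kernel-verified Lean document; each statement's English description precedes it below -/
import Mathlib

section
/- Let N, J ≥ 1, A ∈ ℝ^{N×J}, b ∈ ℝ^J, Q ∈ ℝ^J with Q ≥ 0, and let u : ℝ → ℝ be strictly increasing. Denote by X = {x ∈ ℝ^J : 0 ≤ x ≤ Q} the feasible set of order fills. Then x* ∈ X maximizes the function x ↦ b·x − max_{1 ≤ i ≤ N} (Ax)_i over X if and only if x* maximizes the function x ↦ min_{p ∈ Δ_N} ∑_{i=1}^N p_i · u(b·x − (Ax)_i) over X. (Asymptotic equivalence of the CPCAM market-clearing problem with the optimization problem of a market maker with extreme ambiguity aversion.) -/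
lemma simplex_inf_eq {N : ℕ} (ne : (Finset.univ : Finset (Fin N)).Nonempty)
    (f : Fin N → ℝ) :
    sInf {y : ℝ | ∃ p : Fin N → ℝ, (∀ i, 0 ≤ p i) ∧ ∑ i, p i = 1 ∧
        y = ∑ i, p i * f i} = Finset.univ.inf' ne f := by
  obtain ⟨i0, -, hi0⟩ := Finset.exists_mem_eq_inf' ne f
  have hmem : Finset.univ.inf' ne f ∈ {y : ℝ | ∃ p : Fin N → ℝ, (∀ i, 0 ≤ p i) ∧
      ∑ i, p i = 1 ∧ y = ∑ i, p i * f i} := by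
    refine ⟨fun i => if i = i0 then 1 else 0, fun i => by positivity, by simp, ?_⟩
    rw [hi0]
    simp [ite_mul, Finset.sum_ite_eq']
  have hlb : ∀ y ∈ {y : ℝ | ∃ p : Fin N → ℝ, (∀ i, 0 ≤ p i) ∧
      ∑ i, p i = 1 ∧ y = ∑ i, p i * f i}, Finset.univ.inf' ne f ≤ y := by
    rintro y ⟨p, hp0, hps, rfl⟩
    calc Finset.univ.inf' ne f = ∑ i, p i * Finset.univ.inf' ne f := by
          rw [← Finset.sum_mul, hps, one_mul]
      _ ≤ ∑ i, p i * f i := by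
          refine Finset.sum_le_sum fun i _ => ?_
          exact mul_le_mul_of_nonneg_left (Finset.inf'_le _ (Finset.mem_univ i)) (hp0 i)
  exact le_antisymm (csInf_le ⟨_, hlb⟩ hmem) (le_csInf ⟨_, hmem⟩ hlb)

lemma inf'_u_sub {N : ℕ} (ne : (Finset.univ : Finset (Fin N)).Nonempty)
    (u : ℝ → ℝ) (hu : Monotone u) (c : ℝ) (g : Fin N → ℝ) :
    Finset.univ.inf' ne (fun i => u (c - g i)) = u (c - Finset.univ.sup' ne g) := by
  obtain ⟨i1, -, hi1⟩ := Finset.exists_mem_eq_sup' ne g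
  refine le_antisymm ?_ ?_
  · rw [hi1]
    exact Finset.inf'_le _ (Finset.mem_univ i1)
  · refine Finset.le_inf' _ _ fun i _ => hu ?_
    exact sub_le_sub_left (Finset.le_sup' _ (Finset.mem_univ i)) c

/-- For the feasible set `X = {x : 0 ≤ x ≤ Q}`, a point `x*` maximizes
`x ↦ b·x − max_i (Ax)_i` over `X` if and only if it maximizes
`x ↦ min_{p ∈ Δ_N} ∑ i, p i * u (b·x − (Ax)_i)` over `X`, for any strictly increasing `u`. -/
theorem stmt_2 (N J : ℕ) (hN : 1 ≤ N) (hJ : 1 ≤ J)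
    (A : Fin N → Fin J → ℝ) (b Q : Fin J → ℝ) (hQ : ∀ j, 0 ≤ Q j)
    (u : ℝ → ℝ) (hu : StrictMono u)
    (xstar : Fin J → ℝ) (hxstar : ∀ j, 0 ≤ xstar j ∧ xstar j ≤ Q j) :
    (∀ x : Fin J → ℝ, (∀ j, 0 ≤ x j ∧ x j ≤ Q j) →
        (∑ j, b j * x j) -
          Finset.univ.sup' (Finset.univ_nonempty_iff.mpr (Fin.pos_iff_nonempty.mp hN))
            (fun i => ∑ j, A i j * x j) ≤
        (∑ j, b j * xstar j) -
          Finset.univ.sup' (Finset.univ_nonempty_iff.mpr (Fin.pos_iff_nonempty.mp hN))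
            (fun i => ∑ j, A i j * xstar j))
    ↔
    (∀ x : Fin J → ℝ, (∀ j, 0 ≤ x j ∧ x j ≤ Q j) →
        sInf {y : ℝ | ∃ p : Fin N → ℝ, (∀ i, 0 ≤ p i) ∧ ∑ i, p i = 1 ∧
            y = ∑ i, p i * u ((∑ j, b j * x j) - ∑ j, A i j * x j)} ≤
        sInf {y : ℝ | ∃ p : Fin N → ℝ, (∀ i, 0 ≤ p i) ∧ ∑ i, p i = 1 ∧
            y = ∑ i, p i * u ((∑ j, b j * xstar j) - ∑ j, A i j * xstar j)}) := by
  set ne := Finset.univ_nonempty_iff.mpr (Fin.pos_iff_nonempty.mp hN)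
  have key : ∀ x : Fin J → ℝ,
      sInf {y : ℝ | ∃ p : Fin N → ℝ, (∀ i, 0 ≤ p i) ∧ ∑ i, p i = 1 ∧
          y = ∑ i, p i * u ((∑ j, b j * x j) - ∑ j, A i j * x j)} =
      u ((∑ j, b j * x j) - Finset.univ.sup' ne (fun i => ∑ j, A i j * x j)) := by
    intro x
    rw [simplex_inf_eq ne, inf'_u_sub ne u hu.monotone]
  constructor
  · intro h x hx
    rw [key, key]
    exact hu.monotone (h x hx)
  · intro h x hx
    have := h x hx
    rw [key, key] at this
    exact hu.le_iff_le.mp this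
end

section
/- Let N, J ≥ 1, α > 0, A ∈ ℝ^{N×J}. For ξ ∈ ℝ^N and x ∈ ℝ^J define the market maker's worst-case objective g(ξ, x) = min_{p ∈ Δ_N} ( −∑_{i=1}^N p_i exp( −α ∑_{j=1}^J x_j ((Aᵀξ)_j − A_{ij}) ) ), where (Aᵀξ)_j = ∑_i A_{ij} ξ_i. Let F ⊆ ℝ^N × ℝ^J be any set of feasible pairs such that (ξ₀, 0) ∈ F for some ξ₀. If (ξ*, x*) ∈ F satisfies g(ξ*, x*) ≥ g(ξ, x) for all (ξ, x) ∈ F, then ∑_{j=1}^J x*_j ((Aᵀξ*)_j − A_{ij}) ≥ 0 for every i ∈ {1, …, N}; that is, the market maker loses no money in any state (the market is completely pari-mutuel). -/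
/-- Corollary 1: If `(ξ*, x*)` maximizes the worst-case CARA objective
`g(ξ, x) = min_{p ∈ Δ_N} (−∑ i, p i * exp (−α ∑ j, x j * ((Aᵀξ)_j − A i j)))` over a
feasible set `F` containing a point with zero order fill, then the market maker's payoff
`∑ j, x*_j * ((Aᵀξ*)_j − A i j)` is nonnegative in every state `i`
(the market is completely pari-mutuel). -/
theorem stmt_4 (N J : ℕ) (hN : 1 ≤ N) (hJ : 1 ≤ J) (α : ℝ) (hα : 0 < α)
    (A : Fin N → Fin J → ℝ)
    (F : Set ((Fin N → ℝ) × (Fin J → ℝ)))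
    (ξ₀ : Fin N → ℝ) (hF0 : (ξ₀, fun _ => (0 : ℝ)) ∈ F)
    (ξs : Fin N → ℝ) (xs : Fin J → ℝ) (hmem : (ξs, xs) ∈ F)
    (hopt : ∀ ξ x, (ξ, x) ∈ F →
      sInf {y : ℝ | ∃ p : Fin N → ℝ, (∀ i, 0 ≤ p i) ∧ ∑ i, p i = 1 ∧
          y = -∑ i, p i *
            Real.exp (-α * ∑ j, x j * ((∑ i', A i' j * ξ i') - A i j))} ≤
      sInf {y : ℝ | ∃ p : Fin N → ℝ, (∀ i, 0 ≤ p i) ∧ ∑ i, p i = 1 ∧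
          y = -∑ i, p i *
            Real.exp (-α * ∑ j, xs j * ((∑ i', A i' j * ξs i') - A i j))}) :
    ∀ i, 0 ≤ ∑ j, xs j * ((∑ i', A i' j * ξs i') - A i j) := by
  intro i
  set c : Fin N → ℝ := fun i => ∑ j, xs j * ((∑ i', A i' j * ξs i') - A i j) with hc
  set S : Set ℝ := {y : ℝ | ∃ p : Fin N → ℝ, (∀ i, 0 ≤ p i) ∧ ∑ i, p i = 1 ∧
      y = -∑ i, p i * Real.exp (-α * c i)} with hS
  have hNne : (N : ℝ) ≠ 0 := by positivity
  -- the set at (ξ₀, 0) is {-1}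
  have hset0 : {y : ℝ | ∃ p : Fin N → ℝ, (∀ i, 0 ≤ p i) ∧ ∑ i, p i = 1 ∧
      y = -∑ i, p i *
        Real.exp (-α * ∑ j, (fun _ => (0:ℝ)) j * ((∑ i', A i' j * ξ₀ i') - A i j))}
      = {(-1 : ℝ)} := by
    ext y
    simp only [Set.mem_setOf_eq, Set.mem_singleton_iff]
    constructor
    · rintro ⟨p, hp0, hp1, rfl⟩
      simp [hp1]
    · rintro rfl
      refine ⟨fun _ => (N : ℝ)⁻¹, fun _ => by positivity, ?_, ?_⟩
      · simp [Finset.sum_const, mul_inv_cancel₀ hNne]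
      · simp [Finset.sum_const, mul_inv_cancel₀ hNne]
  -- S is bounded below
  have hbdd : BddBelow S := by
    refine ⟨-∑ i, Real.exp (-α * c i), ?_⟩
    rintro y ⟨p, hp0, hp1, rfl⟩
    have : ∑ i, p i * Real.exp (-α * c i) ≤ ∑ i, Real.exp (-α * c i) := by
      apply Finset.sum_le_sum
      intro k _
      have hpk : p k ≤ 1 := by
        calc p k ≤ ∑ i, p i := Finset.single_le_sum (fun i _ => hp0 i) (Finset.mem_univ k)
        _ = 1 := hp1
      nlinarith [Real.exp_pos (-α * c k), hp0 k]
    linarith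
  -- the Dirac point mass at i is in S
  have hmemS : -Real.exp (-α * c i) ∈ S := by
    refine ⟨fun k => if k = i then 1 else 0, fun k => by positivity, ?_, ?_⟩
    · simp
    · simp [ite_mul]
  have h1 : sInf S ≤ -Real.exp (-α * c i) := csInf_le hbdd hmemS
  have h2 : (-1 : ℝ) ≤ sInf S := by
    have := hopt ξ₀ (fun _ => (0:ℝ)) hF0
    rw [hset0] at this
    simpa using this
  have : Real.exp (-α * c i) ≤ 1 := by linarith
  rw [show (1:ℝ) = Real.exp 0 by simp] at this
  have hle : -α * c i ≤ 0 := Real.exp_le_exp.mp this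
  nlinarith
end

section
/- Let Q, β, c, x ∈ ℝ with Q ≥ 0 and 0 ≤ x ≤ Q, and suppose the limit order logic holds: x = 0 whenever c > β, and x = Q whenever c < β. Then the revenue c·x satisfies c·x = Q·c + β·(x − Q) − Q·max(0, c − β) = min( Q·c + β·(x − Q), β·x ). In particular, on the feasible set defined by the limit order logic, the bilinear revenue term equals a piecewise linear (concave, as a minimum of two affine) expression in (c, x). -/
/-- Linearization of the revenue term. If `0 ≤ x ≤ Q` and the limit order
logic holds (`x = 0` when `c > β`, `x = Q` when `c < β`), then
`c·x = Q·c + β·(x − Q) − Q·max 0 (c − β) = min (Q·c + β·(x − Q)) (β·x)`. -/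
theorem stmt_5 (Q β c x : ℝ) (hQ : 0 ≤ Q) (hx0 : 0 ≤ x) (hxQ : x ≤ Q)
    (h1 : β < c → x = 0) (h2 : c < β → x = Q) :
    c * x = Q * c + β * (x - Q) - Q * max 0 (c - β) ∧
    c * x = min (Q * c + β * (x - Q)) (β * x) := by
  rcases lt_trichotomy c β with h | h | h
  · have hx := h2 h
    subst hx
    constructor
    · rw [max_eq_left (by linarith)]; ring
    · rw [min_eq_left (by nlinarith)]; ring
  · subst h
    constructor
    · rw [max_eq_left (by linarith)]; ring
    · rw [min_eq_right (by nlinarith)]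
  · have hx := h1 h
    subst hx
    constructor
    · rw [max_eq_right (by linarith)]; ring
    · rw [min_eq_right (by nlinarith)]; ring
end

section
/- Let N ≥ 1 and θ ∈ ℝ^N with θ_i > 0 for all i. Then the function G : ℝ^N × (0, ∞) → ℝ defined by G(ω, μ) = μ · ln( ∑_{i=1}^N θ_i e^{ω_i/μ} ) is convex on the convex set ℝ^N × (0, ∞). -/
/-- Two-function Hölder inequality for positive functions on `Fin N`. -/
lemma holder_aux {N : ℕ} (x y : Fin N → ℝ) (hx : ∀ i, 0 < x i) (hy : ∀ i, 0 < y i)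
    {l : ℝ} (hl0 : 0 ≤ l) (hl1 : l ≤ 1) :
    ∑ i, (x i) ^ l * (y i) ^ (1 - l) ≤ (∑ i, x i) ^ l * (∑ i, y i) ^ (1 - l) := by
  rcases Nat.eq_zero_or_pos N with h | h
  · subst h
    simp only [Finset.univ_eq_empty, Finset.sum_empty]
    positivity
  have hX : 0 < ∑ i, x i := Finset.sum_pos (fun i _ => hx i) (by simp [Finset.univ_nonempty_iff, Fin.pos_iff_nonempty.mp h])
  have hY : 0 < ∑ i, y i := Finset.sum_pos (fun i _ => hy i) (by simp [Finset.univ_nonempty_iff, Fin.pos_iff_nonempty.mp h])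
  have key : ∑ i, (x i / ∑ j, x j) ^ l * (y i / ∑ j, y j) ^ (1 - l) ≤ 1 := by
    calc ∑ i, (x i / ∑ j, x j) ^ l * (y i / ∑ j, y j) ^ (1 - l)
        ≤ ∑ i, (l * (x i / ∑ j, x j) + (1 - l) * (y i / ∑ j, y j)) := by
          apply Finset.sum_le_sum
          intro i _
          exact Real.geom_mean_le_arith_mean2_weighted hl0 (by linarith)
            (div_nonneg (hx i).le hX.le) (div_nonneg (hy i).le hY.le) (by ring)
      _ = 1 := by
          rw [Finset.sum_add_distrib, ← Finset.mul_sum, ← Finset.mul_sum,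
            ← Finset.sum_div, ← Finset.sum_div, div_self hX.ne', div_self hY.ne']
          ring
  have expand : ∀ i, (x i) ^ l * (y i) ^ (1 - l) =
      ((∑ j, x j) ^ l * (∑ j, y j) ^ (1 - l)) *
        ((x i / ∑ j, x j) ^ l * (y i / ∑ j, y j) ^ (1 - l)) := by
    intro i
    rw [Real.div_rpow (hx i).le hX.le, Real.div_rpow (hy i).le hY.le]
    field_simp
  calc ∑ i, (x i) ^ l * (y i) ^ (1 - l)
      = ((∑ j, x j) ^ l * (∑ j, y j) ^ (1 - l)) *
          ∑ i, (x i / ∑ j, x j) ^ l * (y i / ∑ j, y j) ^ (1 - l) := by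
        rw [Finset.mul_sum]; exact Finset.sum_congr rfl fun i _ => expand i
    _ ≤ ((∑ j, x j) ^ l * (∑ j, y j) ^ (1 - l)) * 1 := by
        apply mul_le_mul_of_nonneg_left key
        positivity
    _ = (∑ i, x i) ^ l * (∑ i, y i) ^ (1 - l) := by ring

/-- Lemma 5: For `θ_i > 0`, the function
`G(ω, μ) = μ · ln (∑ i, θ i * e^{ω i / μ})` is convex on `ℝ^N × (0, ∞)`. -/
theorem stmt_8 (N : ℕ) (hN : 1 ≤ N) (θ : Fin N → ℝ) (hθ : ∀ i, 0 < θ i) :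
    ConvexOn ℝ ((Set.univ : Set (Fin N → ℝ)) ×ˢ Set.Ioi (0 : ℝ))
      (fun p : (Fin N → ℝ) × ℝ => p.2 * Real.log (∑ i, θ i * Real.exp (p.1 i / p.2))) := by
  have hne : (Finset.univ : Finset (Fin N)).Nonempty := by
    simp [Finset.univ_nonempty_iff, Fin.pos_iff_nonempty.mp hN]
  refine ⟨(convex_univ).prod (convex_Ioi 0), ?_⟩
  rintro ⟨ω, μ⟩ ⟨-, hμ⟩ ⟨ω', ν⟩ ⟨-, hν⟩ a b ha hb hab
  simp only [Set.mem_Ioi] at hμ hν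
  dsimp only
  set m : ℝ := a * μ + b * ν with hm_def
  have hm : 0 < m := by
    rcases lt_or_eq_of_le ha with ha' | ha'
    · have : 0 ≤ b * ν := mul_nonneg hb hν.le
      nlinarith
    · have hb1 : b = 1 := by linarith
      simp [hm_def, ← ha', hb1, hν]
  set l : ℝ := a * μ / m with hl_def
  have hl0 : 0 ≤ l := div_nonneg (mul_nonneg ha hμ.le) hm.le
  have hl1 : l ≤ 1 := by
    rw [hl_def, div_le_one hm]
    nlinarith [mul_nonneg hb hν.le]
  have hone_sub : 1 - l = b * ν / m := by
    rw [hl_def]; field_simp; rw [hm_def]; ring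
  set A : ℝ := ∑ i, θ i * Real.exp (ω i / μ) with hA_def
  set B : ℝ := ∑ i, θ i * Real.exp (ω' i / ν) with hB_def
  have hApos : 0 < A := Finset.sum_pos (fun i _ => mul_pos (hθ i) (Real.exp_pos _)) hne
  have hBpos : 0 < B := Finset.sum_pos (fun i _ => mul_pos (hθ i) (Real.exp_pos _)) hne
  have key : ∑ i, θ i * Real.exp ((a • ω + b • ω') i / m) ≤ A ^ l * B ^ (1 - l) := by
    have := holder_aux (fun i => θ i * Real.exp (ω i / μ)) (fun i => θ i * Real.exp (ω' i / ν))
      (fun i => mul_pos (hθ i) (Real.exp_pos _)) (fun i => mul_pos (hθ i) (Real.exp_pos _))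
      hl0 hl1
    refine le_trans (le_of_eq ?_) this
    apply Finset.sum_congr rfl
    intro i _
    rw [Real.mul_rpow (hθ i).le (Real.exp_pos _).le,
      Real.mul_rpow (hθ i).le (Real.exp_pos _).le,
      ← Real.exp_mul, ← Real.exp_mul]
    have harg : (a • ω + b • ω') i / m = ω i / μ * l + ω' i / ν * (1 - l) := by
      rw [hl_def, hone_sub]
      simp only [Pi.add_apply, Pi.smul_apply, smul_eq_mul]
      field_simp
    have hθsum : θ i = θ i ^ l * θ i ^ (1 - l) := by
      rw [← Real.rpow_add (hθ i)]; simp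
    calc θ i * Real.exp ((a • ω + b • ω') i / m)
        = (θ i ^ l * θ i ^ (1 - l)) * Real.exp (ω i / μ * l + ω' i / ν * (1 - l)) := by
          rw [← hθsum, harg]
      _ = θ i ^ l * Real.exp (ω i / μ * l) * (θ i ^ (1 - l) * Real.exp (ω' i / ν * (1 - l))) := by
          rw [Real.exp_add]; ring
  -- now take logs
  have hsum_pos : 0 < ∑ i, θ i * Real.exp ((a • ω + b • ω') i / m) :=
    Finset.sum_pos (fun i _ => mul_pos (hθ i) (Real.exp_pos _)) hne
  have hlog : Real.log (∑ i, θ i * Real.exp ((a • ω + b • ω') i / m))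
      ≤ l * Real.log A + (1 - l) * Real.log B := by
    calc Real.log (∑ i, θ i * Real.exp ((a • ω + b • ω') i / m))
        ≤ Real.log (A ^ l * B ^ (1 - l)) := Real.log_le_log hsum_pos key
      _ = l * Real.log A + (1 - l) * Real.log B := by
          rw [Real.log_mul (by positivity) (by positivity),
            Real.log_rpow hApos, Real.log_rpow hBpos]
  have hsnd : (a • (ω, μ) + b • (ω', ν)).2 = m := rfl
  have hfst : (a • (ω, μ) + b • (ω', ν)).1 = a • ω + b • ω' := rfl
  rw [hsnd, hfst]
  calc m * Real.log (∑ i, θ i * Real.exp ((a • ω + b • ω') i / m))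
      ≤ m * (l * Real.log A + (1 - l) * Real.log B) := by
        exact mul_le_mul_of_nonneg_left hlog hm.le
    _ = a * (μ * Real.log A) + b * (ν * Real.log B) := by
        rw [hl_def, hone_sub]; field_simp
end

section
/- Let N ≥ 1, Ω > 0, q ∈ ℝ^N with q_i > 0 for all i and ∑_{i=1}^N q_i = 1, and d ∈ ℝ^N. Let Ψ = { p ∈ Δ_N : ∑_{i=1}^N p_i ln(p_i/q_i) ≤ Ω } (with the convention 0·ln 0 = 0). Then strong duality holds for the Kullback–Leibler-constrained linear minimization: min_{p ∈ Ψ} ∑_{i=1}^N d_i p_i = sup_{μ > 0} ( −μΩ − μ · ln( ∑_{i=1}^N q_i e^{−d_i/μ} ) ). -/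
open Real Finset Filter

lemma gibbs_ineq {N : ℕ} (p r : Fin N → ℝ) (hp : ∀ i, 0 ≤ p i) (hr : ∀ i, 0 < r i)
    (hp1 : ∑ i, p i = 1) (hr1 : ∑ i, r i = 1) :
    0 ≤ ∑ i, p i * Real.log (p i / r i) := by
  have key : ∀ i, p i - r i ≤ p i * Real.log (p i / r i) := by
    intro i
    rcases eq_or_lt_of_le (hp i) with h | h
    · simp [← h]
      linarith [(hr i).le]
    · have hlog := Real.log_le_sub_one_of_pos (div_pos (hr i) h)
      rw [Real.log_div (hr i).ne' h.ne'] at hlog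
      have hdv : p i * Real.log (p i / r i) = p i * (Real.log (p i) - Real.log (r i)) := by
        rw [Real.log_div h.ne' (hr i).ne']
      rw [hdv]
      have h2 : r i / p i - 1 = (r i - p i) / p i := by field_simp
      rw [h2, le_div_iff₀ h] at hlog
      nlinarith
  calc (0:ℝ) = ∑ i, (p i - r i) := by rw [Finset.sum_sub_distrib, hp1, hr1]; ring
    _ ≤ _ := Finset.sum_le_sum fun i _ => key i

lemma sum_q_exp_pos {N : ℕ} (hN : 1 ≤ N) (q : Fin N → ℝ) (hq : ∀ i, 0 < q i) (f : Fin N → ℝ) :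
    0 < ∑ i, q i * Real.exp (f i) := by
  have : Nonempty (Fin N) := Fin.pos_iff_nonempty.mp hN
  exact Finset.sum_pos (fun i _ => mul_pos (hq i) (Real.exp_pos _)) Finset.univ_nonempty

lemma weak_dual {N : ℕ} (hN : 1 ≤ N) (Ω : ℝ) (q d p : Fin N → ℝ) (hq : ∀ i, 0 < q i)
    (μ : ℝ) (hμ : 0 < μ) (hp : ∀ i, 0 ≤ p i) (hp1 : ∑ i, p i = 1)
    (hpΩ : ∑ i, p i * Real.log (p i / q i) ≤ Ω) :
    -μ * Ω - μ * Real.log (∑ i, q i * Real.exp (-(d i) / μ)) ≤ ∑ i, d i * p i := by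
  set Z : ℝ := ∑ i, q i * Real.exp (-(d i) / μ) with hZdef
  have hZ : 0 < Z := sum_q_exp_pos hN q hq _
  set r : Fin N → ℝ := fun i => q i * Real.exp (-(d i) / μ) / Z with hrdef
  have hr : ∀ i, 0 < r i := fun i => div_pos (mul_pos (hq i) (Real.exp_pos _)) hZ
  have hr1 : ∑ i, r i = 1 := by rw [← Finset.sum_div, div_self hZ.ne']
  have hgibbs := gibbs_ineq p r hp hr hp1 hr1
  -- termwise decomposition
  have hterm : ∀ i, p i * Real.log (p i / q i)
      = p i * Real.log (p i / r i) + p i * (-(d i) / μ - Real.log Z) := by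
    intro i
    rcases eq_or_lt_of_le (hp i) with h | h
    · simp [← h]
    · have hru : r i / q i = Real.exp (-(d i) / μ) / Z := by
        have : r i = q i * (Real.exp (-(d i) / μ) / Z) := by rw [hrdef]; ring
        rw [this, mul_comm (q i), mul_div_assoc, div_self (hq i).ne', mul_one]
      have hlogr : Real.log (r i / q i) = -(d i) / μ - Real.log Z := by
        rw [hru, Real.log_div (Real.exp_pos _).ne' hZ.ne', Real.log_exp]
      have hsplit : p i / q i = (p i / r i) * (r i / q i) := by
        rw [div_mul_div_comm, mul_comm (r i) (q i), mul_div_mul_right _ _ (hr i).ne']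
      rw [hsplit, Real.log_mul (div_pos h (hr i)).ne' (div_pos (hr i) (hq i)).ne', hlogr]
      ring
  have hsum : ∑ i, p i * Real.log (p i / q i)
      = (∑ i, p i * Real.log (p i / r i)) + (-(∑ i, d i * p i) / μ - Real.log Z) := by
    rw [Finset.sum_congr rfl fun i _ => hterm i, Finset.sum_add_distrib]
    congr 1
    rw [Finset.sum_congr rfl (fun i _ => show p i * (-(d i) / μ - Real.log Z)
          = -(d i * p i) / μ - Real.log Z * p i from by ring),
      Finset.sum_sub_distrib, ← Finset.mul_sum, hp1, mul_one, ← Finset.sum_div,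
      ← Finset.sum_neg_distrib]
  set T : ℝ := ∑ i, d i * p i with hT
  have h3 : -T / μ - Real.log Z ≤ Ω := by
    rw [hsum] at hpΩ
    linarith
  have hx := mul_le_mul_of_nonneg_left h3 hμ.le
  rw [mul_sub, show μ * (-T / μ) = -T from by field_simp] at hx
  linarith



/-- strong duality for the KL-constrained linear minimization: With
`Ψ = {p ∈ Δ_N : ∑ i, p i ln (p i / q i) ≤ Ω}` (for `Ω > 0` and strictly positive prior `q`),
the minimum of `∑ i, d i * p i` over `Ψ` is attained and equals
`sup_{μ > 0} (−μΩ − μ ln (∑ i, q i e^{−d i/μ}))`. -/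
theorem stmt_14 (N : ℕ) (hN : 1 ≤ N) (Ω : ℝ) (hΩ : 0 < Ω)
    (q : Fin N → ℝ) (hq : ∀ i, 0 < q i) (hq1 : ∑ i, q i = 1) (d : Fin N → ℝ) :
    ∃ pstar : Fin N → ℝ,
      ((∀ i, 0 ≤ pstar i) ∧ (∑ i, pstar i) = 1 ∧
        (∑ i, pstar i * Real.log (pstar i / q i)) ≤ Ω) ∧
      (∀ p : Fin N → ℝ, (∀ i, 0 ≤ p i) → (∑ i, p i) = 1 →
        (∑ i, p i * Real.log (p i / q i)) ≤ Ω →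
        (∑ i, d i * pstar i) ≤ ∑ i, d i * p i) ∧
      (∑ i, d i * pstar i) =
        sSup {y : ℝ | ∃ μ : ℝ, 0 < μ ∧
          y = -μ * Ω - μ * Real.log (∑ i, q i * Real.exp (-(d i) / μ))} := by
  have hne : Nonempty (Fin N) := Fin.pos_iff_nonempty.mp hN
  have huniv : (Finset.univ : Finset (Fin N)).Nonempty := Finset.univ_nonempty
  set m : ℝ := Finset.univ.inf' huniv d with hm
  have hmd : ∀ i, m ≤ d i := fun i => Finset.inf'_le d (Finset.mem_univ i)
  set A : Finset (Fin N) := Finset.univ.filter (fun i => d i = m) with hA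
  have hAne : A.Nonempty := by
    obtain ⟨i, _, hi⟩ := Finset.exists_mem_eq_inf' huniv d
    exact ⟨i, by simp [hA, hi.symm]; rfl⟩
  set Q : ℝ := ∑ i ∈ A, q i with hQ
  have hQpos : 0 < Q := Finset.sum_pos (fun i _ => hq i) hAne
  by_cases hcase : -Real.log Q ≤ Ω
  · -- easy case: conditional distribution on the argmin set
    have hps0 : ∀ i, 0 ≤ (if d i = m then q i / Q else 0) := by
      intro i; split_ifs
      · exact (div_pos (hq i) hQpos).le
      · exact le_rfl
    have hps1 : ∑ i, (if d i = m then q i / Q else 0) = 1 := by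
      rw [← Finset.sum_filter, ← hA, ← Finset.sum_div, ← hQ, div_self hQpos.ne']
    have hpsKL : ∑ i, (if d i = m then q i / Q else 0) *
        Real.log ((if d i = m then q i / Q else 0) / q i) ≤ Ω := by
      have h1 : ∀ i : Fin N, (if d i = m then q i / Q else 0) *
          Real.log ((if d i = m then q i / Q else 0) / q i)
          = (if d i = m then (q i / Q) * (-Real.log Q) else 0) := by
        intro i; split_ifs with h
        · congr 1
          rw [div_div, mul_comm Q (q i), ← div_div, div_self (hq i).ne', one_div,
            Real.log_inv]
        · simp
      rw [Finset.sum_congr rfl fun i _ => h1 i, ← Finset.sum_filter, ← hA, ← Finset.sum_mul,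
        ← Finset.sum_div, ← hQ, div_self hQpos.ne', one_mul]
      exact hcase
    have hval : ∑ i, d i * (if d i = m then q i / Q else 0) = m := by
      have h1 : ∀ i : Fin N, d i * (if d i = m then q i / Q else 0)
          = (if d i = m then m * (q i / Q) else 0) := by
        intro i; split_ifs with h
        · rw [h]
        · ring
      rw [Finset.sum_congr rfl fun i _ => h1 i, ← Finset.sum_filter, ← hA, ← Finset.mul_sum,
        ← Finset.sum_div, ← hQ, div_self hQpos.ne', mul_one]
    have hub : ∀ y ∈ {y : ℝ | ∃ μ : ℝ, 0 < μ ∧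
        y = -μ * Ω - μ * Real.log (∑ i, q i * Real.exp (-(d i) / μ))}, y ≤ m := by
      rintro y ⟨μ, hμ, rfl⟩
      have h := weak_dual hN Ω q d _ hq μ hμ hps0 hps1 hpsKL
      rwa [hval] at h
    refine ⟨fun i => if d i = m then q i / Q else 0, ⟨hps0, hps1, hpsKL⟩, ?_, ?_⟩ <;> beta_reduce
    · intro p hp hp1 _
      rw [hval]
      calc m = ∑ i, m * p i := by rw [← Finset.mul_sum, hp1, mul_one]
        _ ≤ ∑ i, d i * p i :=
          Finset.sum_le_sum fun i _ => mul_le_mul_of_nonneg_right (hmd i) (hp i)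
    · rw [hval]
      apply le_antisymm
      · apply le_of_forall_sub_le
        intro ε hε
        set μ := ε / Ω with hμdef
        have hμ : 0 < μ := div_pos hε hΩ
        have hZpos := sum_q_exp_pos hN q hq (fun i => -(d i) / μ)
        have hZle : (∑ i, q i * Real.exp (-(d i) / μ)) ≤ Real.exp (-m / μ) := by
          calc ∑ i, q i * Real.exp (-(d i) / μ) ≤ ∑ i, q i * Real.exp (-m / μ) := by
                apply Finset.sum_le_sum
                intro i _
                have h5 : -(d i) / μ ≤ -m / μ := by gcongr <;> linarith [hmd i]
                exact mul_le_mul_of_nonneg_left (Real.exp_le_exp.2 h5) (hq i).le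
            _ = Real.exp (-m / μ) := by rw [← Finset.sum_mul, hq1, one_mul]
        have hlog : Real.log (∑ i, q i * Real.exp (-(d i) / μ)) ≤ -m / μ :=
          (Real.log_le_iff_le_exp hZpos).2 hZle
        have hg : m - ε ≤ -μ * Ω - μ * Real.log (∑ i, q i * Real.exp (-(d i) / μ)) := by
          have h2 := mul_le_mul_of_nonneg_left hlog hμ.le
          have h3 : μ * (-m / μ) = -m := by field_simp
          have h4 : μ * Ω = ε := by rw [hμdef]; field_simp
          linarith
        exact le_trans hg (le_csSup ⟨m, hub⟩ ⟨μ, hμ, rfl⟩)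
      · exact csSup_le ⟨_, ⟨1, one_pos, rfl⟩⟩ hub
  · -- hard case: Gibbs distribution, temperature found by IVT
    push_neg at hcase
    set c : Fin N → ℝ := fun i => d i - m with hc
    have hc0 : ∀ i, 0 ≤ c i := fun i => sub_nonneg.2 (hmd i)
    set W : ℝ → ℝ := fun t => ∑ i, q i * Real.exp (-(t * c i)) with hW
    set G : ℝ → ℝ := fun t => ∑ i, q i * c i * Real.exp (-(t * c i)) with hG
    have hWpos : ∀ t, 0 < W t := fun t => sum_q_exp_pos hN q hq _
    set h : ℝ → ℝ := fun t => -(t * G t) / W t - Real.log (W t) with hh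
    have hWcont : Continuous W := by
      apply continuous_finset_sum
      intro i _
      fun_prop
    have hGcont : Continuous G := by
      apply continuous_finset_sum
      intro i _
      fun_prop
    have hcont : Continuous h := by
      apply Continuous.sub
      · exact ((continuous_id.mul hGcont).neg).div hWcont fun t => (hWpos t).ne'
      · exact hWcont.log fun t => (hWpos t).ne'
    have hW0 : W 0 = 1 := by simp [hW, hq1]
    have hh0 : h 0 = 0 := by simp [hh, hW0]
    have htW : Tendsto W atTop (nhds Q) := by
      have hQs : Q = ∑ i, (if d i = m then q i else 0) := by rw [hQ, hA, Finset.sum_filter]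
      rw [hW, hQs]
      apply tendsto_finset_sum
      intro i _
      by_cases hi : d i = m
      · have hci : c i = 0 := by rw [hc]; simp [hi]
        simp only [hci, mul_zero, neg_zero, Real.exp_zero, mul_one, hi, if_true]
        exact tendsto_const_nhds
      · have hci : 0 < c i := lt_of_le_of_ne (hc0 i) fun hcontr => hi (by
          have := hcontr.symm
          rw [hc] at this
          simp only at this
          linarith)
        simp only [hi, if_false]
        have h1 : Tendsto (fun t : ℝ => -(t * c i)) atTop atBot :=
          tendsto_neg_atTop_atBot.comp (Tendsto.atTop_mul_const hci tendsto_id)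
        have h2 : Tendsto (fun t : ℝ => Real.exp (-(t * c i))) atTop (nhds 0) :=
          Real.tendsto_exp_atBot.comp h1
        have h3 := h2.const_mul (q i)
        simpa using h3
    have htG : Tendsto (fun t => t * G t) atTop (nhds 0) := by
      have heq : (fun t : ℝ => t * G t)
          = fun t : ℝ => ∑ i, q i * ((t * c i) * Real.exp (-(t * c i))) := by
        funext t
        rw [hG, Finset.mul_sum]
        exact Finset.sum_congr rfl fun i _ => by ring
      rw [heq]
      have h0 : Tendsto (fun t : ℝ => ∑ i : Fin N, q i * ((t * c i) * Real.exp (-(t * c i))))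
          atTop (nhds (∑ i : Fin N, (0:ℝ))) := by
        apply tendsto_finset_sum
        intro i _
        by_cases hi : c i = 0
        · simp [hi]
        · have hci : 0 < c i := lt_of_le_of_ne (hc0 i) (Ne.symm hi)
          have h1 : Tendsto (fun t : ℝ => t * c i) atTop atTop :=
            Tendsto.atTop_mul_const hci tendsto_id
          have h2 : Tendsto (fun x : ℝ => x * Real.exp (-x)) atTop (nhds 0) := by
            simpa using Real.tendsto_pow_mul_exp_neg_atTop_nhds_zero 1
          have h3 := (h2.comp h1).const_mul (q i)
          simpa [Function.comp] using h3
      simpa using h0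
    have hth : Tendsto h atTop (nhds (-Real.log Q)) := by
      have h1 : Tendsto (fun t => -(t * G t) / W t) atTop (nhds 0) := by
        have := (htG.neg).div htW hQpos.ne'
        rw [neg_zero, zero_div] at this
        exact this
      have h2 : Tendsto (fun t => Real.log (W t)) atTop (nhds (Real.log Q)) :=
        htW.log hQpos.ne'
      have h3 := h1.sub h2
      rw [hh]
      simpa using h3
    have hev : ∀ᶠ t in atTop, Ω < h t := hth.eventually (lt_mem_nhds hcase)
    obtain ⟨T, hT1, hT2⟩ := (hev.and (eventually_ge_atTop (0:ℝ))).exists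
    have hIcc : Ω ∈ Set.Icc (h 0) (h T) := ⟨by rw [hh0]; exact hΩ.le, hT1.le⟩
    obtain ⟨t, ht, hht⟩ := intermediate_value_Icc hT2 hcont.continuousOn hIcc
    have htpos : 0 < t := by
      rcases lt_or_eq_of_le ht.1 with h' | h'
      · exact h'
      · exfalso
        rw [← h', hh0] at hht
        exact hΩ.ne hht
    -- the Gibbs distribution at inverse temperature t
    set Z : ℝ := ∑ i, q i * Real.exp (-(t * d i)) with hZ
    have hZpos : 0 < Z := sum_q_exp_pos hN q hq _
    set pstar : Fin N → ℝ := fun i => q i * Real.exp (-(t * d i)) / Z with hpstar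
    have hps0 : ∀ i, 0 ≤ pstar i :=
      fun i => (div_pos (mul_pos (hq i) (Real.exp_pos _)) hZpos).le
    have hps1 : ∑ i, pstar i = 1 := by
      rw [hpstar]
      rw [← Finset.sum_div, ← hZ, div_self hZpos.ne']
    have hZW : Z = Real.exp (-(t * m)) * W t := by
      rw [hZ, hW, Finset.mul_sum]
      apply Finset.sum_congr rfl
      intro i _
      have he : -(t * d i) = -(t * m) + -(t * c i) := by rw [hc]; ring
      rw [he, Real.exp_add]
      ring
    have hFW : (∑ i, q i * d i * Real.exp (-(t * d i)))
        = Real.exp (-(t * m)) * (m * W t + G t) := by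
      rw [hW, hG, mul_add, Finset.mul_sum, Finset.mul_sum, Finset.mul_sum,
        ← Finset.sum_add_distrib]
      apply Finset.sum_congr rfl
      intro i _
      have he : -(t * d i) = -(t * m) + -(t * c i) := by rw [hc]; ring
      rw [he, Real.exp_add, hc]
      ring
    have hSval : ∑ i, d i * pstar i = (m * W t + G t) / W t := by
      have h1 : ∑ i, d i * pstar i = (∑ i, q i * d i * Real.exp (-(t * d i))) / Z := by
        rw [Finset.sum_div]
        apply Finset.sum_congr rfl
        intro i _
        rw [hpstar]
        ring
      rw [h1, hFW, hZW, mul_div_mul_left _ _ (Real.exp_pos _).ne']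
    have hlogZ : Real.log Z = -(t * m) + Real.log (W t) := by
      rw [hZW, Real.log_mul (Real.exp_pos _).ne' (hWpos t).ne', Real.log_exp]
    have hlin : ∑ i, pstar i * Real.log (pstar i / q i)
        = -(t * ∑ i, d i * pstar i) - Real.log Z := by
      have hterm : ∀ i, pstar i * Real.log (pstar i / q i)
          = pstar i * (-(t * d i) - Real.log Z) := by
        intro i
        have h0 : pstar i = q i * (Real.exp (-(t * d i)) / Z) := by rw [hpstar]; ring
        have hpq : pstar i / q i = Real.exp (-(t * d i)) / Z := by
          rw [h0, mul_comm (q i), mul_div_assoc, div_self (hq i).ne', mul_one]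
        rw [hpq, Real.log_div (Real.exp_pos _).ne' hZpos.ne', Real.log_exp]
      rw [Finset.sum_congr rfl fun i _ => hterm i,
        Finset.sum_congr rfl (fun i _ => show pstar i * (-(t * d i) - Real.log Z)
          = -(t * (d i * pstar i)) - Real.log Z * pstar i from by ring),
        Finset.sum_sub_distrib, Finset.sum_neg_distrib, ← Finset.mul_sum,
        ← Finset.mul_sum, hps1, mul_one]
    have hKL : ∑ i, pstar i * Real.log (pstar i / q i) = Ω := by
      rw [hlin, hSval, hlogZ, ← hht, hh]
      have hWne := (hWpos t).ne'
      field_simp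
      ring
    have hΩeq : Ω = -(t * ∑ i, d i * pstar i) - Real.log Z := by rw [← hKL, hlin]
    have hZeq : (∑ i, q i * Real.exp (-(d i) / t⁻¹)) = Z := by
      rw [hZ]
      apply Finset.sum_congr rfl
      intro i _
      congr 2
      rw [div_eq_mul_inv, inv_inv]
      ring
    have hvS : ∑ i, d i * pstar i
        = -t⁻¹ * Ω - t⁻¹ * Real.log (∑ i, q i * Real.exp (-(d i) / t⁻¹)) := by
      rw [hZeq, hΩeq]
      field_simp
      ring
    have hub : ∀ y ∈ {y : ℝ | ∃ μ : ℝ, 0 < μ ∧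
        y = -μ * Ω - μ * Real.log (∑ i, q i * Real.exp (-(d i) / μ))},
        y ≤ ∑ i, d i * pstar i := by
      rintro y ⟨μ, hμ, rfl⟩
      exact weak_dual hN Ω q d pstar hq μ hμ hps0 hps1 hKL.le
    have hmem : (∑ i, d i * pstar i) ∈ {y : ℝ | ∃ μ : ℝ, 0 < μ ∧
        y = -μ * Ω - μ * Real.log (∑ i, q i * Real.exp (-(d i) / μ))} :=
      ⟨t⁻¹, inv_pos.2 htpos, hvS⟩
    refine ⟨pstar, ⟨hps0, hps1, hKL.le⟩, ?_, ?_⟩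
    · intro p hp hp1 hpΩ
      have hwd := weak_dual hN Ω q d p hq t⁻¹ (inv_pos.2 htpos) hp hp1 hpΩ
      rw [hvS]
      exact hwd
    · exact le_antisymm (le_csSup ⟨_, hub⟩ hmem) (csSup_le ⟨_, hmem⟩ hub)
end
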